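/- Let rels be a set of elements of the free group FreeGroup (Fin 3) on three generators which contains the square (FreeGroup.of i)² for each i ∈ Fin 3. Let G := PresentedGroup rels, with generators rᵢ := PresentedGroup.of i, let π : FreeGroup (Fin 3) →* Multiplicative (ZMod 2) be the homomorphism sending each generator FreeGroup.of i to the nontrivial element, and let H be the subgroup of G generated by all products rᵢ·rⱼ for i, j ∈ Fin 3. Then H has index 2 in G if and only if every element of rels lies in the kernel of π (i.e., every relator has even length as a word in the generators); moreover, if some relator does not lie in the kernel of π, then H = G. -/

import Mathlib

/-- For the presented group `G = ⟨r₀,r₁,r₂ ∣ rels⟩` in which the squares of the generators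
are relators, the subgroup `H` generated by all products `rᵢ·rⱼ` has index 2 in `G` if and
only if every relator has even length (lies in the kernel of the map to `ℤ/2` sending every
generator to the nontrivial element); and if some relator has odd length then `H = G`. -/
theorem rotation_subgroup_index_two_iff_even_relators (rels : Set (FreeGroup (Fin 3)))
    (hsq : ∀ i : Fin 3, (FreeGroup.of i) ^ 2 ∈ rels)
    (π : FreeGroup (Fin 3) →* Multiplicative (ZMod 2))
    (hπ : π = FreeGroup.lift fun _ => Multiplicative.ofAdd 1)
    (H : Subgroup (PresentedGroup rels))
    (hH : H = Subgroup.closure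
      {x | ∃ i j : Fin 3,
        x = (PresentedGroup.of i : PresentedGroup rels) * PresentedGroup.of j}) :
    (H.index = 2 ↔ ∀ r ∈ rels, r ∈ π.ker) ∧
    ((∃ r ∈ rels, r ∉ π.ker) → H = ⊤) := by
  -- relators are trivial in the presented group
  have hrel1 : ∀ r ∈ rels, PresentedGroup.mk rels r = 1 := fun r hr =>
    (QuotientGroup.eq_one_iff _).2 (Subgroup.subset_normalClosure hr)
  have hsq1 : ∀ i : Fin 3,
      (PresentedGroup.of i : PresentedGroup rels) * PresentedGroup.of i = 1 := by
    intro i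
    have := hrel1 _ (hsq i)
    rw [map_pow] at this
    rw [sq] at this; exact this
  have hinv : ∀ i : Fin 3,
      (PresentedGroup.of i : PresentedGroup rels)⁻¹ = PresentedGroup.of i := by
    intro i
    rw [inv_eq_iff_mul_eq_one]
    exact hsq1 i
  have hgen : ∀ i j : Fin 3,
      (PresentedGroup.of i : PresentedGroup rels) * PresentedGroup.of j ∈ H := by
    intro i j
    rw [hH]
    exact Subgroup.subset_closure ⟨i, j, rfl⟩
  -- conjugation by a generator preserves H
  have hconj : ∀ i : Fin 3, ∀ h ∈ H,
      (PresentedGroup.of i : PresentedGroup rels) * h * PresentedGroup.of i ∈ H := by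
    intro i h hh
    rw [hH] at hh
    induction hh using Subgroup.closure_induction with
    | mem x hx =>
      obtain ⟨j, k, rfl⟩ := hx
      have e : (PresentedGroup.of i : PresentedGroup rels) * (PresentedGroup.of j *
          PresentedGroup.of k) * PresentedGroup.of i =
          (PresentedGroup.of i * PresentedGroup.of j) *
          (PresentedGroup.of k * PresentedGroup.of i) := by group
      rw [e]
      exact mul_mem (hgen i j) (hgen k i)
    | one =>
      rw [mul_one, hsq1 i]
      exact H.one_mem
    | mul x y _ _ hx hy =>
      have e : (PresentedGroup.of i : PresentedGroup rels) * (x * y) * PresentedGroup.of i =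
          (PresentedGroup.of i * x * PresentedGroup.of i) *
          (PresentedGroup.of i * y * PresentedGroup.of i) := by
        rw [show (PresentedGroup.of i : PresentedGroup rels) * x * PresentedGroup.of i *
            (PresentedGroup.of i * y * PresentedGroup.of i) =
            PresentedGroup.of i * x * (PresentedGroup.of i * PresentedGroup.of i) * y *
            PresentedGroup.of i from by group, hsq1 i]
        group
      rw [e]
      exact mul_mem hx hy
    | inv x _ hx =>
      have e : (PresentedGroup.of i : PresentedGroup rels) * x⁻¹ * PresentedGroup.of i =
          ((PresentedGroup.of i)⁻¹ * x * (PresentedGroup.of i)⁻¹)⁻¹ := by group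
      rw [e, hinv i]
      exact inv_mem hx
  -- key parity claim
  have key : ∀ w : FreeGroup (Fin 3),
      (π w = 1 ∧ PresentedGroup.mk rels w ∈ H) ∨
      (π w = Multiplicative.ofAdd 1 ∧
        PresentedGroup.mk rels w * PresentedGroup.of 0 ∈ H) := by
    intro w
    induction w using FreeGroup.induction_on with
    | C1 =>
      left
      exact ⟨map_one π, by rw [map_one]; exact H.one_mem⟩
    | of i =>
      right
      constructor
      · rw [hπ]; exact FreeGroup.lift_apply_of
      · exact hgen i 0
    | inv_of i _ =>
      right
      constructor
      · rw [map_inv, hπ]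
        show ((FreeGroup.lift fun _ : Fin 3 => Multiplicative.ofAdd (1 : ZMod 2))
            (FreeGroup.of i))⁻¹ = Multiplicative.ofAdd 1
        rw [FreeGroup.lift_apply_of]
        decide
      · rw [map_inv]
        show (PresentedGroup.of i : PresentedGroup rels)⁻¹ * PresentedGroup.of 0 ∈ H
        rw [hinv i]
        exact hgen i 0
    | mul x y hx hy =>
      rw [map_mul, map_mul]
      rcases hx with ⟨px, mx⟩ | ⟨px, mx⟩ <;> rcases hy with ⟨py, my⟩ | ⟨py, my⟩
      · left
        exact ⟨by rw [px, py, one_mul], mul_mem mx my⟩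
      · right
        refine ⟨by rw [px, py, one_mul], ?_⟩
        rw [mul_assoc]
        exact mul_mem mx my
      · right
        refine ⟨by rw [px, py, mul_one], ?_⟩
        have e : PresentedGroup.mk rels x * PresentedGroup.mk rels y * PresentedGroup.of 0 =
            (PresentedGroup.mk rels x * PresentedGroup.of 0) *
            (PresentedGroup.of 0 * PresentedGroup.mk rels y * PresentedGroup.of 0) := by
          rw [show (PresentedGroup.mk rels x * PresentedGroup.of 0) *
              ((PresentedGroup.of 0 : PresentedGroup rels) * PresentedGroup.mk rels y *
                PresentedGroup.of 0) =
              PresentedGroup.mk rels x * (PresentedGroup.of 0 * PresentedGroup.of 0) *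
              PresentedGroup.mk rels y * PresentedGroup.of 0 from by group, hsq1 0]
          group
        rw [e]
        exact mul_mem mx (hconj 0 _ my)
      · left
        refine ⟨by rw [px, py]; decide, ?_⟩
        have t := mul_mem mx (hconj 0 _ my)
        have e : (PresentedGroup.mk rels x * PresentedGroup.of 0) *
            (PresentedGroup.of 0 * (PresentedGroup.mk rels y * PresentedGroup.of 0) *
              PresentedGroup.of 0) =
            PresentedGroup.mk rels x * (PresentedGroup.of 0 * PresentedGroup.of 0) *
            (PresentedGroup.mk rels y * (PresentedGroup.of 0 * PresentedGroup.of 0)) := by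
          group
        rw [hsq1 0] at e
        simp only [mul_one] at e
        exact e ▸ t
  -- odd relator forces H = ⊤
  have hodd : (∃ r ∈ rels, r ∉ π.ker) → H = ⊤ := by
    rintro ⟨r, hr, hrker⟩
    have h0 : (PresentedGroup.of 0 : PresentedGroup rels) ∈ H := by
      rcases key r with ⟨h1, _⟩ | ⟨_, h2⟩
      · exact absurd (MonoidHom.mem_ker.2 h1) hrker
      · rwa [hrel1 r hr, one_mul] at h2
    rw [eq_top_iff]
    intro x _
    refine PresentedGroup.generated_by rels H (fun j => ?_) x
    have hj : ((PresentedGroup.of j : PresentedGroup rels) * PresentedGroup.of 0) *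
        PresentedGroup.of 0 ∈ H := mul_mem (hgen j 0) h0
    rwa [mul_assoc, hsq1 0, mul_one] at hj
  -- even relators give index 2
  have heven : (∀ r ∈ rels, r ∈ π.ker) → H.index = 2 := by
    intro hall
    have hlift : ∀ r ∈ rels,
        FreeGroup.lift (fun _ : Fin 3 => Multiplicative.ofAdd (1 : ZMod 2)) r = 1 := by
      intro r hr
      have := MonoidHom.mem_ker.1 (hall r hr)
      rwa [hπ] at this
    set φ : PresentedGroup rels →* Multiplicative (ZMod 2) := PresentedGroup.toGroup hlift
      with hφ
    have hφof : ∀ i : Fin 3, φ (PresentedGroup.of i) = Multiplicative.ofAdd (1 : ZMod 2) :=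
      fun i => PresentedGroup.toGroup.of hlift
    have hφmk : ∀ w : FreeGroup (Fin 3), φ (PresentedGroup.mk rels w) = π w := by
      intro w
      rw [hπ]
      exact FreeGroup.lift_unique (φ.comp (PresentedGroup.mk rels)) (fun i => hφof i)
    have hker : H = φ.ker := by
      apply le_antisymm
      · rw [hH, Subgroup.closure_le]
        rintro x ⟨i, j, rfl⟩
        have : φ (PresentedGroup.of i * PresentedGroup.of j) = 1 := by
          rw [map_mul, hφof, hφof]; decide
        exact this
      · intro g hg
        obtain ⟨w, rfl⟩ := PresentedGroup.mk_surjective rels g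
        have hw : π w = 1 := by
          rw [← hφmk]
          exact hg
        rcases key w with ⟨_, m⟩ | ⟨p, _⟩
        · exact m
        · rw [hw] at p
          exact absurd p.symm (by decide)
    have hsurj : Function.Surjective φ := by
      intro a
      rcases (by decide : ∀ a : Multiplicative (ZMod 2),
          a = 1 ∨ a = Multiplicative.ofAdd 1) a with h | h
      · exact ⟨1, by rw [map_one, h]⟩
      · exact ⟨PresentedGroup.of 0, by rw [hφof, h]⟩
    rw [hker, Subgroup.index_ker, MonoidHom.range_eq_top.2 hsurj, Subgroup.card_top,
      Nat.card_eq_fintype_card]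
    rfl
  refine ⟨⟨fun hidx => ?_, heven⟩, hodd⟩
  by_contra hc
  push_neg at hc
  obtain ⟨r, hr, hrk⟩ := hc
  have := hodd ⟨r, hr, hrk⟩
  rw [this, Subgroup.index_top] at hidx
  exact absurd hidx (by norm_num)
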